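/- With H, S, F, λ₁, τ, K, L as in the context, assume in addition 0 < τ ≤ (λ₁ − K)/(4L²). Then for all z, v ∈ H one has ‖S(z + τ F(z + v))‖² ≤ e^{−(λ₁ − K) τ} ‖z‖² + 2(τ² + τ/(λ₁ − K)) e^{−2 λ₁ τ} ‖F(v)‖². -/

import Mathlib

open MeasureTheory

/-- One-step dissipativity bound from the proofs of Propositions 2.6 and 4.2 of the paper:
if `τ ≤ (λ₁ − K)/(4L²)`, then
`‖S(z + τF(z+v))‖² ≤ e^{−(λ₁−K)τ}‖z‖² + 2(τ² + τ/(λ₁−K)) e^{−2λ₁τ} ‖F(v)‖²`. -/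
theorem stmt_5 {H : Type*} [NormedAddCommGroup H] [InnerProductSpace ℝ H]
    (S : H →L[ℝ] H) (F : H → H) (lam1 τ K L : ℝ)
    (hlam1 : 0 < lam1) (hτ : 0 < τ)
    (hS : ∀ x : H, ‖S x‖ ≤ Real.exp (-lam1 * τ) * ‖x‖)
    (hK : K < lam1)
    (hF1 : ∀ x y : H, (inner ℝ (x - y) (F x - F y) : ℝ) ≤ K * ‖x - y‖ ^ 2)
    (hL : 0 < L)
    (hF2 : ∀ x y : H, ‖F x - F y‖ ≤ L * ‖x - y‖)
    (hτ2 : τ ≤ (lam1 - K) / (4 * L ^ 2))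
    (z v : H) :
    ‖S (z + τ • F (z + v))‖ ^ 2 ≤
      Real.exp (-(lam1 - K) * τ) * ‖z‖ ^ 2 +
        2 * (τ ^ 2 + τ / (lam1 - K)) * Real.exp (-2 * lam1 * τ) * ‖F v‖ ^ 2 := by
  have ha : 0 < lam1 - K := by linarith
  have hEpos : 0 < Real.exp (-2 * lam1 * τ) := Real.exp_pos _
  -- Step 1: contraction of S
  have h1 : ‖S (z + τ • F (z + v))‖ ^ 2
      ≤ Real.exp (-2 * lam1 * τ) * ‖z + τ • F (z + v)‖ ^ 2 := by
    have h := pow_le_pow_left₀ (norm_nonneg (S (z + τ • F (z + v)))) (hS (z + τ • F (z + v))) 2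
    have e : (Real.exp (-lam1 * τ)) ^ 2 = Real.exp (-2 * lam1 * τ) := by
      rw [sq, ← Real.exp_add]; ring_nf
    calc ‖S (z + τ • F (z + v))‖ ^ 2 ≤ (Real.exp (-lam1 * τ) * ‖z + τ • F (z + v)‖) ^ 2 := h
      _ = (Real.exp (-lam1 * τ)) ^ 2 * ‖z + τ • F (z + v)‖ ^ 2 := by ring
      _ = Real.exp (-2 * lam1 * τ) * ‖z + τ • F (z + v)‖ ^ 2 := by rw [e]
  -- Step 2: expansion of the norm square
  have h2 : ‖z + τ • F (z + v)‖ ^ 2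
      = ‖z‖ ^ 2 + 2 * (τ * (inner ℝ z (F (z + v)) : ℝ)) + τ ^ 2 * ‖F (z + v)‖ ^ 2 := by
    rw [norm_add_sq_real, real_inner_smul_right, norm_smul, Real.norm_eq_abs, mul_pow, sq_abs]
  -- Step 3: one-sided Lipschitz
  have h3 : (inner ℝ z (F (z + v)) : ℝ) ≤ K * ‖z‖ ^ 2 + ‖z‖ * ‖F v‖ := by
    have h := hF1 (z + v) v
    simp only [add_sub_cancel_right] at h
    have e : (inner ℝ z (F (z + v)) : ℝ) = inner ℝ z (F (z + v) - F v) + inner ℝ z (F v) := by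
      rw [← inner_add_right, sub_add_cancel]
    have h' := real_inner_le_norm z (F v)
    linarith [e]
  -- Step 4: global Lipschitz
  have h4 : ‖F (z + v)‖ ≤ L * ‖z‖ + ‖F v‖ := by
    have h := hF2 (z + v) v
    simp only [add_sub_cancel_right] at h
    calc ‖F (z + v)‖ = ‖(F (z + v) - F v) + F v‖ := by rw [sub_add_cancel]
      _ ≤ ‖F (z + v) - F v‖ + ‖F v‖ := norm_add_le _ _
      _ ≤ L * ‖z‖ + ‖F v‖ := by linarith
  have h4sq : ‖F (z + v)‖ ^ 2 ≤ 2 * L ^ 2 * ‖z‖ ^ 2 + 2 * ‖F v‖ ^ 2 := by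
    have h := pow_le_pow_left₀ (norm_nonneg _) h4 2
    nlinarith [sq_nonneg (L * ‖z‖ - ‖F v‖)]
  -- Step 5: Young's inequality
  have h5 : ‖z‖ * ‖F v‖ ≤ (lam1 - K) / 4 * ‖z‖ ^ 2 + 1 / (lam1 - K) * ‖F v‖ ^ 2 := by
    have e : (lam1 - K) * ((lam1 - K) / 4 * ‖z‖ ^ 2 + 1 / (lam1 - K) * ‖F v‖ ^ 2)
        = (lam1 - K) ^ 2 / 4 * ‖z‖ ^ 2 + ‖F v‖ ^ 2 := by
      field_simp
    rw [← mul_le_mul_iff_right₀ ha, e]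
    nlinarith [sq_nonneg ((lam1 - K) * ‖z‖ - 2 * ‖F v‖)]
  -- multiplied forms
  have hC : 2 * τ * (‖z‖ * ‖F v‖)
      ≤ (lam1 - K) * τ / 2 * ‖z‖ ^ 2 + 2 * (τ / (lam1 - K)) * ‖F v‖ ^ 2 := by
    have h := mul_le_mul_of_nonneg_left h5 (by positivity : (0:ℝ) ≤ 2 * τ)
    have e : 2 * τ * ((lam1 - K) / 4 * ‖z‖ ^ 2 + 1 / (lam1 - K) * ‖F v‖ ^ 2)
        = (lam1 - K) * τ / 2 * ‖z‖ ^ 2 + 2 * (τ / (lam1 - K)) * ‖F v‖ ^ 2 := by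
      field_simp; ring
    linarith [e ▸ h]
  have hτ2' : 4 * L ^ 2 * τ ≤ lam1 - K := by
    rw [le_div_iff₀ (by positivity)] at hτ2; linarith
  have hD : 2 * τ ^ 2 * L ^ 2 * ‖z‖ ^ 2 ≤ (lam1 - K) * τ / 2 * ‖z‖ ^ 2 := by
    nlinarith [mul_le_mul_of_nonneg_right hτ2' (by positivity : (0:ℝ) ≤ τ * ‖z‖ ^ 2 / 2)]
  have hA : 2 * τ * (inner ℝ z (F (z + v)) : ℝ) ≤ 2 * τ * (K * ‖z‖ ^ 2 + ‖z‖ * ‖F v‖) :=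
    mul_le_mul_of_nonneg_left h3 (by positivity)
  have hB : τ ^ 2 * ‖F (z + v)‖ ^ 2 ≤ τ ^ 2 * (2 * L ^ 2 * ‖z‖ ^ 2 + 2 * ‖F v‖ ^ 2) :=
    mul_le_mul_of_nonneg_left h4sq (sq_nonneg τ)
  -- key estimate
  have key : ‖z + τ • F (z + v)‖ ^ 2
      ≤ (1 + (lam1 + K) * τ) * ‖z‖ ^ 2 + 2 * (τ ^ 2 + τ / (lam1 - K)) * ‖F v‖ ^ 2 := by
    rw [h2]
    linarith [hA, hB, hC, hD]
  -- exponential bound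
  have hexp : Real.exp (-2 * lam1 * τ) * (1 + (lam1 + K) * τ) ≤ Real.exp (-(lam1 - K) * τ) := by
    have e : Real.exp (-(lam1 - K) * τ)
        = Real.exp ((lam1 + K) * τ) * Real.exp (-2 * lam1 * τ) := by
      rw [← Real.exp_add]; ring_nf
    have h : 1 + (lam1 + K) * τ ≤ Real.exp ((lam1 + K) * τ) := by
      linarith [Real.add_one_le_exp ((lam1 + K) * τ)]
    rw [e]
    calc Real.exp (-2 * lam1 * τ) * (1 + (lam1 + K) * τ)
        ≤ Real.exp (-2 * lam1 * τ) * Real.exp ((lam1 + K) * τ) :=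
          mul_le_mul_of_nonneg_left h hEpos.le
      _ = Real.exp ((lam1 + K) * τ) * Real.exp (-2 * lam1 * τ) := mul_comm _ _
  -- conclude
  have t2 : Real.exp (-2 * lam1 * τ) * ‖z + τ • F (z + v)‖ ^ 2
      ≤ Real.exp (-2 * lam1 * τ) *
        ((1 + (lam1 + K) * τ) * ‖z‖ ^ 2 + 2 * (τ ^ 2 + τ / (lam1 - K)) * ‖F v‖ ^ 2) :=
    mul_le_mul_of_nonneg_left key hEpos.le
  have t3 : Real.exp (-2 * lam1 * τ) * (1 + (lam1 + K) * τ) * ‖z‖ ^ 2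
      ≤ Real.exp (-(lam1 - K) * τ) * ‖z‖ ^ 2 :=
    mul_le_mul_of_nonneg_right hexp (sq_nonneg _)
  calc ‖S (z + τ • F (z + v))‖ ^ 2
      ≤ Real.exp (-2 * lam1 * τ) * ‖z + τ • F (z + v)‖ ^ 2 := h1
    _ ≤ Real.exp (-2 * lam1 * τ) *
        ((1 + (lam1 + K) * τ) * ‖z‖ ^ 2 + 2 * (τ ^ 2 + τ / (lam1 - K)) * ‖F v‖ ^ 2) := t2
    _ ≤ Real.exp (-(lam1 - K) * τ) * ‖z‖ ^ 2 +
        2 * (τ ^ 2 + τ / (lam1 - K)) * Real.exp (-2 * lam1 * τ) * ‖F v‖ ^ 2 := by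
        linarith [t3]
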